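/- Let P and Q be orthogonal projections on a complex Hilbert space H. The range of the Sasaki arrow P ⇒ Q := P^⊥ ∨ (P ∧ Q) equals the set { ψ ∈ H : Pψ ∈ ran Q }; in particular this set is a closed linear subspace of H. -/

import Mathlib

variable {H : Type} [NormedAddCommGroup H] [InnerProductSpace ℂ H] [CompleteSpace H]

/-- `P` is an orthogonal projection on `H`: self-adjoint and idempotent. -/
def IsOrthProj (P : H →L[ℂ] H) : Prop := IsSelfAdjoint P ∧ P * P = P

/-- The range of the Sasaki arrow `P ⇒ Q = P^⊥ ∨ (P ∧ Q)`, i.e. the closed linear span of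
`ran (1 - P) ∪ (ran P ∩ ran Q)`, equals `{ψ | Pψ ∈ ran Q}`; in particular this set
is a closed linear subspace of `H`. -/
theorem stmt3 (P Q : H →L[ℂ] H) (hP : IsOrthProj P) (hQ : IsOrthProj Q) :
    (((LinearMap.range ((1 - P : H →L[ℂ] H) : H →ₗ[ℂ] H) ⊔
      (LinearMap.range (P : H →ₗ[ℂ] H) ⊓ LinearMap.range (Q : H →ₗ[ℂ] H))).topologicalClosure :
        Submodule ℂ H) : Set H) = {ψ : H | P ψ ∈ LinearMap.range (Q : H →ₗ[ℂ] H)} ∧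
      IsClosed {ψ : H | P ψ ∈ LinearMap.range (Q : H →ₗ[ℂ] H)} := by
  obtain ⟨-, hP2⟩ := hP
  obtain ⟨-, hQ2⟩ := hQ
  have hPP : ∀ y, P (P y) = P y := fun y => by
    have := ContinuousLinearMap.ext_iff.mp hP2 y
    simpa [ContinuousLinearMap.mul_apply] using this
  have hQQ : ∀ y, Q (Q y) = Q y := fun y => by
    have := ContinuousLinearMap.ext_iff.mp hQ2 y
    simpa [ContinuousLinearMap.mul_apply] using this
  have hQrange : (LinearMap.range (Q : H →ₗ[ℂ] H) : Set H) = (LinearMap.ker ((1 - Q : H →L[ℂ] H) : H →ₗ[ℂ] H) : Set H) := by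
    ext x
    simp only [SetLike.mem_coe, LinearMap.mem_range, LinearMap.mem_ker, ContinuousLinearMap.coe_coe,
      ContinuousLinearMap.coe_sub', Pi.sub_apply, ContinuousLinearMap.one_apply, sub_eq_zero]
    constructor
    · rintro ⟨y, rfl⟩
      exact (hQQ y).symm
    · intro h
      exact ⟨x, h.symm⟩
  have hQclosed : IsClosed (LinearMap.range (Q : H →ₗ[ℂ] H) : Set H) := by
    rw [hQrange]
    exact ContinuousLinearMap.isClosed_ker (1 - Q)
  have hSclosed : IsClosed {ψ : H | P ψ ∈ LinearMap.range (Q : H →ₗ[ℂ] H)} := by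
    have : {ψ : H | P ψ ∈ LinearMap.range (Q : H →ₗ[ℂ] H)} = P ⁻¹' (LinearMap.range (Q : H →ₗ[ℂ] H) : Set H) := rfl
    rw [this]
    exact hQclosed.preimage P.continuous
  have hMeq : ((LinearMap.range ((1 - P : H →L[ℂ] H) : H →ₗ[ℂ] H) ⊔ (LinearMap.range (P : H →ₗ[ℂ] H) ⊓ LinearMap.range (Q : H →ₗ[ℂ] H)) :
      Submodule ℂ H) : Set H) = {ψ : H | P ψ ∈ LinearMap.range (Q : H →ₗ[ℂ] H)} := by
    ext x
    simp only [SetLike.mem_coe, Set.mem_setOf_eq]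
    constructor
    · intro hx
      rcases Submodule.mem_sup.mp hx with ⟨a, ha, b, hb, rfl⟩
      rcases ha with ⟨y, rfl⟩
      obtain ⟨hbP, hbQ⟩ := hb
      rcases hbP with ⟨z, rfl⟩
      have : P ((1 - P) y + P z) = P z := by
        simp [map_add, ContinuousLinearMap.sub_apply, ContinuousLinearMap.one_apply,
          map_sub, hPP]
      rw [ContinuousLinearMap.coe_coe, ContinuousLinearMap.coe_coe, this]
      exact hbQ
    · intro hx
      have hxsplit : x = (1 - P) x + P x := by
        simp
      rw [hxsplit]
      exact Submodule.add_mem_sup ⟨x, rfl⟩ ⟨⟨x, rfl⟩, hx⟩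
  constructor
  · rw [Submodule.topologicalClosure_coe, hMeq, hSclosed.closure_eq]
  · exact hSclosed
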